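/- arXiv:1207.6331 — 4 statements merged into one kernel-verified Lean document; each statement's English description precedes it below -/
import Mathlib

section
/- Every face F of an n-box B = I₁ × ⋯ × Iₙ (product of nondegenerate compact intervals) is a set of the form {x ∈ B : xᵢ = aᵢ} or {x ∈ B : xᵢ = bᵢ} for some coordinate i, where Iᵢ = [aᵢ, bᵢ]; if all faces of B are listed with the induced orientation (F⁺ᵢ gets (−1)^{i+1}·o and F⁻ᵢ gets (−1)^i·o, where o is the orientation of B), then every (n−2)-dimensional sub-box x contained in exactly two faces of B is an oriented sub-face of one face with one orientation and of the other face with the opposite orientation. -/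
open Set

/-- An oriented box in `ℝⁿ`: a product of (possibly degenerate) compact intervals,
together with an orientation (`true` = `+1`, `false` = `-1`). -/
structure OBox (n : ℕ) where
  lower : Fin n → ℝ
  upper : Fin n → ℝ
  le : ∀ i, lower i ≤ upper i
  orient : Bool

namespace OBox

variable {n : ℕ}

/-- The set of points of the box. -/
def toSet (B : OBox n) : Set (Fin n → ℝ) :=
  {x | ∀ i, x i ∈ Set.Icc (B.lower i) (B.upper i)}

/-- The dimension of a box: the number of nondegenerate coordinate intervals. -/
noncomputable def dim (B : OBox n) : ℕ :=
  (Finset.univ.filter (fun i => B.lower i < B.upper i)).card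

/-- The diameter of a box: the width of its widest component interval. -/
noncomputable def diam (B : OBox n) : ℝ := ⨆ i, (B.upper i - B.lower i)

/-- The same box with reversed orientation. -/
def neg (B : OBox n) : OBox n := ⟨B.lower, B.upper, B.le, !B.orient⟩

/-- The orientation of the box as an integer `±1`. -/
def sign (B : OBox n) : ℤ := if B.orient then 1 else -1

/-- The intersection of the boxes `B` and `C` is empty or has dimension at most `k`. -/
def InterDimLE (B C : OBox n) (k : ℕ) : Prop :=
  (¬ ∀ i, max (B.lower i) (C.lower i) ≤ min (B.upper i) (C.upper i)) ∨
  (Finset.univ.filter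
      (fun i => max (B.lower i) (C.lower i) < min (B.upper i) (C.upper i))).card ≤ k

/-- `F` is an oriented sub-box of `G`: same dimension, same orientation, contained in it. -/
def OSubBox (F G : OBox n) : Prop :=
  F.toSet ⊆ G.toSet ∧ F.dim = G.dim ∧ F.orient = G.orient

/-- The (0-based) rank of the coordinate `j` among the nondegenerate coordinates of `B`. -/
noncomputable def faceRank (B : OBox n) (j : Fin n) : ℕ :=
  ((Finset.univ.filter (fun i => B.lower i < B.upper i)).filter (fun i => i < j)).card

/-- The induced orientation of the face of `B` in coordinate `j`, on the upper (`s = true`)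
or lower (`s = false`) side: the upper face `Fᵢ⁺` gets `(-1)^(i+1)·o` and the lower face
`Fᵢ⁻` gets `(-1)^i·o`, where `i` is the 1-based rank of `j` among nondegenerate coordinates. -/
noncomputable def faceOrient (B : OBox n) (j : Fin n) (s : Bool) : Bool :=
  Bool.xor B.orient (Bool.xor s (faceRank B j % 2 == 0))

/-- The oriented face of `B` fixing coordinate `j` at its upper (`s = true`) or lower
(`s = false`) endpoint, with the induced orientation. -/
noncomputable def face (B : OBox n) (j : Fin n) (s : Bool) : OBox n where
  lower := fun i => if s ∧ i = j then B.upper j else B.lower i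
  upper := fun i => if ¬(s : Prop) ∧ i = j then B.lower j else B.upper i
  le := by
    intro i
    by_cases hs : s = true <;> by_cases h : i = j <;>
      simp [hs, h, B.le i]
  orient := faceOrient B j s

/-- `F` is an oriented face of `B`. -/
def IsOrientedFace (F B : OBox n) : Prop :=
  ∃ j s, B.lower j < B.upper j ∧ F = face B j s

/-- `F` is an oriented sub-face of `B`: an oriented sub-box of an oriented face. -/
def IsOSubFace (F B : OBox n) : Prop :=
  ∃ G, IsOrientedFace G B ∧ OSubBox F G

/-- `F` is a (not necessarily oriented) sub-face of `B`. -/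
def IsSubFace (F B : OBox n) : Prop :=
  ∃ j s, B.lower j < B.upper j ∧ F.toSet ⊆ (face B j s).toSet ∧ F.dim + 1 = B.dim

end OBox

/-- The union of the points of a set of boxes: `|Ω|`. -/
def unionSet {n : ℕ} (Ω : Set (OBox n)) : Set (Fin n → ℝ) := ⋃ B ∈ Ω, B.toSet

/-- An oriented cubical set of dimension `d` (Definition 4): a finite set of oriented
`d`-boxes with pairwise intersections of dimension at most `d-1`, such that whenever two
boxes share a `(d-1)`-dimensional box, the orientations induced on it as a sub-face of
the two boxes are opposite. -/
structure IsOCS {n : ℕ} (d : ℕ) (Ω : Set (OBox n)) : Prop where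
  finite : Ω.Finite
  dims : ∀ B ∈ Ω, B.dim = d
  inter : ∀ B ∈ Ω, ∀ C ∈ Ω, B ≠ C → OBox.InterDimLE B C (d - 1)
  compat : ∀ B ∈ Ω, ∀ C ∈ Ω, B ≠ C → ∀ F : OBox n,
    F.toSet = B.toSet ∩ C.toSet → F.dim + 1 = d →
    (OBox.IsOSubFace F B → OBox.IsOSubFace F.neg C)

/-- Conditions 1 and 2 of Definition 5 for a candidate oriented boundary `S` of `Ω`. -/
structure IsPreBoundary {n : ℕ} (d : ℕ) (Ω : Set (OBox n)) (S : Set (OBox n)) : Prop where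
  dims : ∀ F ∈ S, F.dim + 1 = d
  inter : ∀ F ∈ S, ∀ G ∈ S, F ≠ G → OBox.InterDimLE F G (d - 2)
  unique : ∀ F ∈ S, ∀ F' : OBox n, OBox.OSubBox F' F →
    ∃! B, B ∈ Ω ∧ OBox.IsOSubFace F' B

/-- `S` is an oriented boundary of the oriented cubical set `Ω` (Definition 5):
it satisfies the two boundary conditions and is maximal with this property. -/
def IsOrientedBoundary {n : ℕ} (d : ℕ) (Ω S : Set (OBox n)) : Prop :=
  IsPreBoundary d Ω S ∧ ∀ F, F ∉ S → ¬ IsPreBoundary d Ω (insert F S)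

/-- `SV` is a sign covering of `S` with respect to `f`: nonzero entries of the sign
vectors certify constant signs of the corresponding components of `f`. -/
def IsSignCovering {n d : ℕ} (SV : OBox n → Fin d → SignType)
    (S : Set (OBox n)) (f : (Fin n → ℝ) → Fin d → ℝ) : Prop :=
  ∀ a ∈ S, ∀ i,
    (SV a i = SignType.pos → ∀ x ∈ a.toSet, 0 < f x i) ∧
    (SV a i = SignType.neg → ∀ x ∈ a.toSet, f x i < 0)

/-- A sign covering is sufficient if every sign vector has a nonzero entry. -/
def IsSufficient {n d : ℕ} (SV : OBox n → Fin d → SignType) (S : Set (OBox n)) : Prop :=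
  ∀ a ∈ S, ∃ i, SV a i ≠ 0

/-- The sign of a real number as an integer. -/
noncomputable def sgn (t : ℝ) : ℤ := if 0 < t then 1 else if t < 0 then -1 else 0

/-- `boolSign true = +`, `boolSign false = -`. -/
def boolSign (b : Bool) : SignType := if b then SignType.pos else SignType.neg

/-- The Brouwer topological degree on `ℝⁿ`, characterized axiomatically by normalization,
the solution property, homotopy invariance, additivity, and local constancy in the
target point on connected components of the complement of `f(∂Ω)`. -/
structure BrouwerDegree (n : ℕ) where
  deg : ((Fin n → ℝ) → (Fin n → ℝ)) → Set (Fin n → ℝ) → (Fin n → ℝ) → ℤ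
  normalization : ∀ (Ω : Set (Fin n → ℝ)) (p : Fin n → ℝ),
    IsOpen Ω → Bornology.IsBounded Ω → p ∉ frontier Ω →
    (deg id Ω p = 1 ↔ p ∈ Ω)
  solution : ∀ (f : (Fin n → ℝ) → (Fin n → ℝ)) (Ω : Set (Fin n → ℝ)) (p : Fin n → ℝ),
    IsOpen Ω → Bornology.IsBounded Ω → ContinuousOn f (closure Ω) →
    p ∉ f '' (frontier Ω) → deg f Ω p ≠ 0 → ∃ x ∈ Ω, f x = p
  homotopy : ∀ (h : ℝ → (Fin n → ℝ) → (Fin n → ℝ)) (Ω : Set (Fin n → ℝ)) (p : Fin n → ℝ),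
    IsOpen Ω → Bornology.IsBounded Ω →
    ContinuousOn (fun q : ℝ × (Fin n → ℝ) => h q.1 q.2) (Set.Icc (0:ℝ) 1 ×ˢ closure Ω) →
    (∀ t ∈ Set.Icc (0:ℝ) 1, p ∉ h t '' (frontier Ω)) →
    deg (h 0) Ω p = deg (h 1) Ω p
  additivity : ∀ (f : (Fin n → ℝ) → (Fin n → ℝ)) (Ω Ω₁ Ω₂ : Set (Fin n → ℝ)) (p : Fin n → ℝ),
    IsOpen Ω → Bornology.IsBounded Ω → IsOpen Ω₁ → IsOpen Ω₂ →
    Ω₁ ⊆ Ω → Ω₂ ⊆ Ω → Disjoint Ω₁ Ω₂ → ContinuousOn f (closure Ω) →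
    p ∉ f '' (closure Ω \ (Ω₁ ∪ Ω₂)) →
    deg f Ω p = deg f Ω₁ p + deg f Ω₂ p
  locConst : ∀ (f : (Fin n → ℝ) → (Fin n → ℝ)) (Ω : Set (Fin n → ℝ)) (p q : Fin n → ℝ),
    IsOpen Ω → Bornology.IsBounded Ω → ContinuousOn f (closure Ω) →
    ∀ C : Set (Fin n → ℝ), IsConnected C → C ⊆ (f '' (frontier Ω))ᶜ →
    p ∈ C → q ∈ C → deg f Ω p = deg f Ω q

/-- The one-dimensional Brouwer degree on `ℝ`, characterized by the same axioms. -/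
structure BrouwerDegree1 where
  deg : (ℝ → ℝ) → Set ℝ → ℝ → ℤ
  normalization : ∀ (Ω : Set ℝ) (p : ℝ),
    IsOpen Ω → Bornology.IsBounded Ω → p ∉ frontier Ω →
    (deg id Ω p = 1 ↔ p ∈ Ω)
  solution : ∀ (f : ℝ → ℝ) (Ω : Set ℝ) (p : ℝ),
    IsOpen Ω → Bornology.IsBounded Ω → ContinuousOn f (closure Ω) →
    p ∉ f '' (frontier Ω) → deg f Ω p ≠ 0 → ∃ x ∈ Ω, f x = p
  homotopy : ∀ (h : ℝ → ℝ → ℝ) (Ω : Set ℝ) (p : ℝ),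
    IsOpen Ω → Bornology.IsBounded Ω →
    ContinuousOn (fun q : ℝ × ℝ => h q.1 q.2) (Set.Icc (0:ℝ) 1 ×ˢ closure Ω) →
    (∀ t ∈ Set.Icc (0:ℝ) 1, p ∉ h t '' (frontier Ω)) →
    deg (h 0) Ω p = deg (h 1) Ω p
  additivity : ∀ (f : ℝ → ℝ) (Ω Ω₁ Ω₂ : Set ℝ) (p : ℝ),
    IsOpen Ω → Bornology.IsBounded Ω → IsOpen Ω₁ → IsOpen Ω₂ →
    Ω₁ ⊆ Ω → Ω₂ ⊆ Ω → Disjoint Ω₁ Ω₂ → ContinuousOn f (closure Ω) →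
    p ∉ f '' (closure Ω \ (Ω₁ ∪ Ω₂)) →
    deg f Ω p = deg f Ω₁ p + deg f Ω₂ p
  locConst : ∀ (f : ℝ → ℝ) (Ω : Set ℝ) (p q : ℝ),
    IsOpen Ω → Bornology.IsBounded Ω → ContinuousOn f (closure Ω) →
    ∀ C : Set ℝ, IsConnected C → C ⊆ (f '' (frontier Ω))ᶜ →
    p ∈ C → q ∈ C → deg f Ω p = deg f Ω q

/-- The topological degree on oriented cubical sets embedded in `ℝⁿ` (of every
dimension `d`), satisfying the degree axioms: the one-dimensional sign formula,
homotopy invariance, the solution property, and additivity. -/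
structure CubicalDegree (n : ℕ) where
  deg : (d : ℕ) → Set (OBox n) → ((Fin n → ℝ) → Fin d → ℝ) → ℤ
  one_dim : ∀ (B : OBox n) (f : (Fin n → ℝ) → Fin 1 → ℝ), B.dim = 1 →
    ContinuousOn f B.toSet → f B.lower 0 ≠ 0 → f B.upper 0 ≠ 0 →
    2 * deg 1 {B} f = B.sign * (sgn (f B.upper 0) - sgn (f B.lower 0))
  homotopy : ∀ (d : ℕ) (Ω S : Set (OBox n)) (h : ℝ → (Fin n → ℝ) → Fin d → ℝ),
    IsOCS d Ω → IsOrientedBoundary d Ω S →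
    ContinuousOn (fun q : ℝ × (Fin n → ℝ) => h q.1 q.2) (Set.Icc (0:ℝ) 1 ×ˢ unionSet Ω) →
    (∀ t ∈ Set.Icc (0:ℝ) 1, ∀ x ∈ unionSet S, h t x ≠ 0) →
    deg d Ω (h 0) = deg d Ω (h 1)
  solution : ∀ (d : ℕ) (Ω S : Set (OBox n)) (f : (Fin n → ℝ) → Fin d → ℝ),
    IsOCS d Ω → IsOrientedBoundary d Ω S → ContinuousOn f (unionSet Ω) →
    (∀ x ∈ unionSet S, f x ≠ 0) → deg d Ω f ≠ 0 → ∃ x ∈ unionSet Ω, f x = 0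
  additivity : ∀ (d : ℕ) (Ω₁ Ω₂ S₁ S₂ S : Set (OBox n)) (f : (Fin n → ℝ) → Fin d → ℝ),
    IsOCS d Ω₁ → IsOCS d Ω₂ → IsOCS d (Ω₁ ∪ Ω₂) → Disjoint Ω₁ Ω₂ →
    IsOrientedBoundary d Ω₁ S₁ → IsOrientedBoundary d Ω₂ S₂ →
    IsOrientedBoundary d (Ω₁ ∪ Ω₂) S →
    ContinuousOn f (unionSet (Ω₁ ∪ Ω₂)) →
    (∀ x ∈ unionSet S₁ ∪ unionSet S₂ ∪ unionSet S, f x ≠ 0) →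
    deg d (Ω₁ ∪ Ω₂) f = deg d Ω₁ f + deg d Ω₂ f

/-- The shrunken set `Ω^ε = {x ∈ int|Ω| : dist(x, ∂|Ω|) ≥ ε}`. -/
noncomputable def shrinkSet {d : ℕ} (Ω : Set (OBox d)) (ε : ℝ) : Set (Fin d → ℝ) :=
  {x | x ∈ interior (unionSet Ω) ∧ ε ≤ Metric.infDist x (frontier (unionSet Ω))}

section Stmt4Aux

open OBox

variable {n : ℕ}

lemma mem_face_aux {B : OBox n} {j : Fin n} {s : Bool} {x : Fin n → ℝ} :
    x ∈ (face B j s).toSet ↔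
      x ∈ B.toSet ∧ x j = (if s then B.upper j else B.lower j) := by
  cases s
  · simp only [OBox.face, OBox.toSet, Set.mem_setOf_eq, Set.mem_Icc, if_neg, if_pos,
      Bool.false_eq_true, false_and, if_false, not_false_iff, true_and]
    constructor
    · intro h
      have hj := h j
      simp only [if_pos rfl] at hj
      refine ⟨fun i => ?_, le_antisymm hj.2 hj.1⟩
      rcases h i with ⟨h1, h2⟩
      by_cases hij : i = j
      · subst hij
        rw [if_pos rfl] at h2
        exact ⟨h1, h2.trans (B.le i)⟩
      · rw [if_neg hij] at h2; exact ⟨h1, h2⟩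
    · rintro ⟨h, hj⟩ i
      by_cases hij : i = j
      · subst hij; rw [if_pos rfl]; exact ⟨(h i).1, le_of_eq hj⟩
      · rw [if_neg hij]; exact h i
  · simp only [OBox.face, OBox.toSet, Set.mem_setOf_eq, Set.mem_Icc, not_true,
      false_and, if_false, true_and, if_true]
    constructor
    · intro h
      have hj := h j
      simp only [if_pos rfl] at hj
      refine ⟨fun i => ?_, le_antisymm hj.2 hj.1⟩
      rcases h i with ⟨h1, h2⟩
      by_cases hij : i = j
      · subst hij
        rw [if_pos rfl] at h1
        exact ⟨(B.le i).trans h1, h2⟩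
      · rw [if_neg hij] at h1; exact ⟨h1, h2⟩
    · rintro ⟨h, hj⟩ i
      by_cases hij : i = j
      · subst hij; rw [if_pos rfl]; exact ⟨le_of_eq hj.symm, (h i).2⟩
      · rw [if_neg hij]; exact h i

lemma face_lower_ne {B : OBox n} {j i : Fin n} (s : Bool) (h : i ≠ j) :
    (face B j s).lower i = B.lower i := by simp [OBox.face, h]

lemma face_upper_ne {B : OBox n} {j i : Fin n} (s : Bool) (h : i ≠ j) :
    (face B j s).upper i = B.upper i := by simp [OBox.face, h]

lemma face_nondeg_iff {B : OBox n} {j i : Fin n} {s : Bool} :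
    (face B j s).lower i < (face B j s).upper i ↔ i ≠ j ∧ B.lower i < B.upper i := by
  by_cases h : i = j
  · subst h
    cases s <;> simp [OBox.face]
  · simp [face_lower_ne s h, face_upper_ne s h, h]

lemma filter_lt_card (j : Fin n) :
    (Finset.univ.filter (fun i => i < j)).card = (j : ℕ) := by
  have : Finset.univ.filter (fun i => i < j) = Finset.Iio j := by ext i; simp
  rw [this]; simp

lemma faceRank_full {B : OBox n} (hB : ∀ i, B.lower i < B.upper i) (j : Fin n) :
    faceRank B j = (j : ℕ) := by
  unfold faceRank
  rw [Finset.filter_true_of_mem (fun i _ => hB i)]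
  exact filter_lt_card j

lemma faceRank_face {B : OBox n} (hB : ∀ i, B.lower i < B.upper i) {j k : Fin n}
    (hjk : j ≠ k) (s : Bool) :
    faceRank (face B j s) k = if j < k then (k : ℕ) - 1 else (k : ℕ) := by
  unfold faceRank
  have h1 : Finset.univ.filter (fun i => (face B j s).lower i < (face B j s).upper i)
      = Finset.univ.filter (fun i => ¬ i = j) := by
    ext i; simp [face_nondeg_iff, hB i]
  rw [h1, Finset.filter_filter]
  by_cases h : j < k
  · rw [if_pos h]
    have h2 : Finset.univ.filter (fun i => ¬ i = j ∧ i < k) = Finset.Iio k \ {j} := by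
      ext i; simp [and_comm]
    rw [h2, Finset.card_sdiff_of_subset (by simp [h])]
    simp
  · rw [if_neg h]
    have h2 : Finset.univ.filter (fun i => ¬ i = j ∧ i < k) = Finset.Iio k := by
      ext i
      simp only [Finset.mem_filter, Finset.mem_univ, true_and, Finset.mem_Iio,
        and_iff_right_iff_imp]
      intro hik hij
      exact h (hij ▸ hik)
    rw [h2]; simp

lemma dim_face_face {B : OBox n} (hB : ∀ i, B.lower i < B.upper i) {j k : Fin n}
    (hjk : j ≠ k) (s t : Bool) :
    (face (face B j s) k t).dim = n - 2 := by
  unfold OBox.dim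
  have h1 : Finset.univ.filter
      (fun i => (face (face B j s) k t).lower i < (face (face B j s) k t).upper i)
      = Finset.univ \ {k, j} := by
    ext i
    simp [face_nondeg_iff, hB i, and_comm]
  rw [h1, Finset.card_sdiff_of_subset (Finset.subset_univ _)]
  have h2 : ({k, j} : Finset (Fin n)).card = 2 := by
    rw [Finset.card_insert_of_notMem (by simp [Ne.symm hjk]), Finset.card_singleton]
  rw [h2, Finset.card_univ, Fintype.card_fin]

lemma parity_pred {m : ℕ} (hm : 1 ≤ m) :
    (((m - 1) % 2 == 0) : Bool) = !((m % 2 == 0) : Bool) := by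
  rcases Nat.mod_two_eq_zero_or_one m with h | h
  · have h' : (m - 1) % 2 = 1 := by omega
    simp [h, h']
  · have h' : (m - 1) % 2 = 0 := by omega
    simp [h, h']

lemma orient_anticomm_lt {B : OBox n} (hB : ∀ i, B.lower i < B.upper i) {j k : Fin n}
    (hjk : j < k) (s t : Bool) :
    (face (face B j s) k t).orient = !(face (face B k t) j s).orient := by
  show faceOrient (face B j s) k t = !faceOrient (face B k t) j s
  unfold faceOrient
  show Bool.xor (faceOrient B j s) _ = !Bool.xor (faceOrient B k t) _
  unfold faceOrient
  rw [faceRank_full hB j, faceRank_full hB k, faceRank_face hB hjk.ne s,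
    faceRank_face hB hjk.ne' t, if_pos hjk, if_neg (by exact fun h => absurd (h.trans hjk) (lt_irrefl _))]
  have hk1 : 1 ≤ (k : ℕ) := by
    have : (j : ℕ) < (k : ℕ) := hjk
    omega
  rw [parity_pred hk1]
  generalize B.orient = o
  generalize ((j : ℕ) % 2 == 0 : Bool) = pj
  generalize ((k : ℕ) % 2 == 0 : Bool) = pk
  revert o s t pj pk
  decide

lemma orient_anticomm {B : OBox n} (hB : ∀ i, B.lower i < B.upper i) {j k : Fin n}
    (hjk : j ≠ k) (s t : Bool) :
    (face (face B j s) k t).orient = !(face (face B k t) j s).orient := by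
  rcases lt_or_gt_of_ne hjk with h | h
  · exact orient_anticomm_lt hB h s t
  · rw [orient_anticomm_lt hB h t s, Bool.not_not]

end Stmt4Aux

/-- every face of an `n`-box `B` is of the form `{x ∈ B : xᵢ = aᵢ}` or
`{x ∈ B : xᵢ = bᵢ}`; moreover every `(n−2)`-dimensional sub-box contained in exactly
two faces of `B` is an oriented sub-face of one face with one orientation and of the
other face with the opposite orientation. -/
theorem stmt4 {n : ℕ} (B : OBox n) (hB : ∀ i, B.lower i < B.upper i) :
    (∀ F : OBox n, OBox.IsOrientedFace F B →
      ∃ i, F.toSet = {x ∈ B.toSet | x i = B.lower i} ∨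
        F.toSet = {x ∈ B.toSet | x i = B.upper i}) ∧
    (∀ (X : OBox n) (j k : Fin n) (s t : Bool), (j, s) ≠ (k, t) →
      X.dim + 2 = n →
      X.toSet ⊆ (OBox.face B j s).toSet → X.toSet ⊆ (OBox.face B k t).toSet →
      (∀ (j' : Fin n) (s' : Bool), X.toSet ⊆ (OBox.face B j' s').toSet →
        (j', s') = (j, s) ∨ (j', s') = (k, t)) →
      ∃ o : Bool, OBox.IsOSubFace { X with orient := o } (OBox.face B j s) ∧
        OBox.IsOSubFace { X with orient := !o } (OBox.face B k t)) := by
  constructor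
  · rintro F ⟨j, s, hj, rfl⟩
    refine ⟨j, ?_⟩
    cases s
    · exact Or.inl (Set.ext fun x => by rw [mem_face_aux]; simp)
    · exact Or.inr (Set.ext fun x => by rw [mem_face_aux]; simp)
  · intro X j k s t hne hdim hXj hXk _
    have hx0 : X.lower ∈ X.toSet := fun i => ⟨le_rfl, X.le i⟩
    have hjk : j ≠ k := by
      rintro rfl
      have h1 := (mem_face_aux.mp (hXj hx0)).2
      have h2 := (mem_face_aux.mp (hXk hx0)).2
      have hst : s ≠ t := fun h => hne (by rw [h])
      have : B.lower j = B.upper j := by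
        cases s <;> cases t <;> simp_all
      exact absurd this (hB j).ne
    have hGk : (OBox.face B j s).lower k < (OBox.face B j s).upper k :=
      face_nondeg_iff.mpr ⟨hjk.symm, hB k⟩
    have hHj : (OBox.face B k t).lower j < (OBox.face B k t).upper j :=
      face_nondeg_iff.mpr ⟨hjk, hB j⟩
    have hsub1 : X.toSet ⊆ (OBox.face (OBox.face B j s) k t).toSet := by
      intro x hx
      rw [mem_face_aux]
      refine ⟨hXj hx, ?_⟩
      have h2 := (mem_face_aux.mp (hXk hx)).2
      cases t
      · rwa [if_neg (by simp), face_lower_ne s hjk.symm]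
      · rwa [if_pos rfl, face_upper_ne s hjk.symm]
    have hsub2 : X.toSet ⊆ (OBox.face (OBox.face B k t) j s).toSet := by
      intro x hx
      rw [mem_face_aux]
      refine ⟨hXk hx, ?_⟩
      have h2 := (mem_face_aux.mp (hXj hx)).2
      cases s
      · rwa [if_neg (by simp), face_lower_ne t hjk]
      · rwa [if_pos rfl, face_upper_ne t hjk]
    have hXdim : X.dim = n - 2 := by omega
    refine ⟨(OBox.face (OBox.face B j s) k t).orient,
      ⟨OBox.face (OBox.face B j s) k t, ⟨k, t, hGk, rfl⟩, hsub1, ?_, rfl⟩,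
      ⟨OBox.face (OBox.face B k t) j s, ⟨j, s, hHj, rfl⟩, hsub2, ?_, ?_⟩⟩
    · show X.dim = _
      rw [hXdim, dim_face_face hB hjk]
    · show X.dim = _
      rw [hXdim, dim_face_face hB hjk.symm]
    · show (!(OBox.face (OBox.face B j s) k t).orient) =
        (OBox.face (OBox.face B k t) j s).orient
      rw [orient_anticomm hB hjk, Bool.not_not]
end

section
/- Let Ω be a d-dimensional oriented cubical set with oriented boundary ∂Ω, f : |Ω| → ℝ^d continuous with 0 ∉ f(|∂Ω|), and SV a sufficient sign covering of ∂Ω with respect to f. Then deg(f, Ω, 0) is uniquely determined by SV: any two continuous functions g, h : |Ω| → ℝ^d for which SV is a sign covering with respect to both satisfy deg(g, Ω, 0) = deg(h, Ω, 0). -/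
open Set

/-- a sufficient sign covering of `∂Ω` determines the degree uniquely:
any two continuous functions for which it is a sign covering have the same degree. -/
theorem stmt8 {n d : ℕ} (cd : CubicalDegree n) (Ω S : Set (OBox n))
    (hΩ : IsOCS d Ω) (hS : IsOrientedBoundary d Ω S)
    (SV : OBox n → Fin d → SignType) (hsuf : IsSufficient SV S)
    (g h : (Fin n → ℝ) → Fin d → ℝ)
    (hgc : ContinuousOn g (unionSet Ω)) (hhc : ContinuousOn h (unionSet Ω))
    (hg0 : ∀ x ∈ unionSet S, g x ≠ 0) (hh0 : ∀ x ∈ unionSet S, h x ≠ 0)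
    (hgSV : IsSignCovering SV S g) (hhSV : IsSignCovering SV S h) :
    cd.deg d Ω g = cd.deg d Ω h := by
  set H : ℝ → (Fin n → ℝ) → Fin d → ℝ :=
    fun t x i => (1 - t) * g x i + t * h x i with hH
  have h0 : H 0 = g := by funext x i; simp [hH]
  have h1 : H 1 = h := by funext x i; simp [hH]
  have key := cd.homotopy d Ω S H hΩ hS ?_ ?_
  · rw [h0, h1] at key; exact key
  · apply continuousOn_pi.mpr
    intro i
    have hg2 : ContinuousOn (fun q : ℝ × (Fin n → ℝ) => g q.2)
        (Set.Icc (0:ℝ) 1 ×ˢ unionSet Ω) :=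
      hgc.comp continuousOn_snd (fun q hq => hq.2)
    have hh2 : ContinuousOn (fun q : ℝ × (Fin n → ℝ) => h q.2)
        (Set.Icc (0:ℝ) 1 ×ˢ unionSet Ω) :=
      hhc.comp continuousOn_snd (fun q hq => hq.2)
    have hg' : ContinuousOn (fun q : ℝ × (Fin n → ℝ) => g q.2 i)
        (Set.Icc (0:ℝ) 1 ×ˢ unionSet Ω) := (continuous_apply i).comp_continuousOn hg2
    have hh' : ContinuousOn (fun q : ℝ × (Fin n → ℝ) => h q.2 i)
        (Set.Icc (0:ℝ) 1 ×ˢ unionSet Ω) := (continuous_apply i).comp_continuousOn hh2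
    have ht : ContinuousOn (fun q : ℝ × (Fin n → ℝ) => q.1)
        (Set.Icc (0:ℝ) 1 ×ˢ unionSet Ω) := continuousOn_fst
    exact ((continuousOn_const.sub ht).mul hg').add (ht.mul hh')
  · rintro t ⟨ht0, ht1⟩ x hx hzero
    obtain ⟨a, ha, hxa⟩ := Set.mem_iUnion₂.mp hx
    obtain ⟨i, hi⟩ := hsuf a ha
    have hz : (1 - t) * g x i + t * h x i = 0 := by
      have := congrFun hzero i
      simpa [hH] using this
    cases hsv : SV a i with
    | zero => exact absurd hsv hi
    | pos =>
      have hgp := (hgSV a ha i).1 hsv x hxa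
      have hhp := (hhSV a ha i).1 hsv x hxa
      rcases ht0.lt_or_eq with htp | hte
      · nlinarith [mul_nonneg (sub_nonneg.mpr ht1) hgp.le, mul_pos htp hhp]
      · rw [← hte] at hz; simp at hz; linarith
    | neg =>
      have hgn := (hgSV a ha i).2 hsv x hxa
      have hhn := (hhSV a ha i).2 hsv x hxa
      rcases ht0.lt_or_eq with htp | hte
      · nlinarith [mul_nonpos_of_nonneg_of_nonpos (sub_nonneg.mpr ht1) hgn.le,
          mul_neg_of_pos_of_neg htp hhn]
      · rw [← hte] at hz; simp at hz; linarith
end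

section
/- Let f : B → ℝ be continuous on a box B ⊆ ℝⁿ and suppose I(f) is an interval extension of f: for each sub-box K with rational endpoints and positive diameter, I(f)(K) is a closed interval containing f(K), and for every ε > 0 there is δ > 0 such that diam(K) < δ implies diam(I(f)(K)) < ε. Then for every compact subset S ⊆ B on which f is nonvanishing, there exists δ > 0 such that every sub-box K ⊆ B with K ∩ S ≠ ∅ and 0 < diam(K) < δ satisfies 0 ∉ I(f)(K); in particular the sign of f on K is determined by I(f)(K). -/
open Set

/-- A box has rational endpoints. -/
def ratBox {n : ℕ} (K : OBox n) : Prop :=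
  ∀ i, (∃ q : ℚ, K.lower i = (q : ℝ)) ∧ ∃ q : ℚ, K.upper i = (q : ℝ)

/-- for an interval extension `I(f) = [Ilo, Ihi]` of a continuous `f`
nonvanishing on a compact `S ⊆ B`, all sufficiently small boxes meeting `S` have
`0 ∉ I(f)(K)`; in particular the sign of `f` on `K` is determined by `I(f)(K)`. -/
theorem stmt13 {n : ℕ} (B : OBox n) (f : (Fin n → ℝ) → ℝ)
    (hf : ContinuousOn f B.toSet)
    (Ilo Ihi : OBox n → ℝ)
    (hencl : ∀ K : OBox n, K.toSet ⊆ B.toSet → ratBox K → 0 < K.diam →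
      ∀ x ∈ K.toSet, f x ∈ Set.Icc (Ilo K) (Ihi K))
    (hconv : ∀ ε > (0:ℝ), ∃ δ > (0:ℝ), ∀ K : OBox n, K.toSet ⊆ B.toSet → ratBox K →
      0 < K.diam → K.diam < δ → Ihi K - Ilo K < ε)
    (S : Set (Fin n → ℝ)) (hScomp : IsCompact S) (hSB : S ⊆ B.toSet)
    (hS0 : ∀ x ∈ S, f x ≠ 0) :
    ∃ δ > (0:ℝ), ∀ K : OBox n, K.toSet ⊆ B.toSet → ratBox K →
      (K.toSet ∩ S).Nonempty → 0 < K.diam → K.diam < δ →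
      (0:ℝ) ∉ Set.Icc (Ilo K) (Ihi K) ∧
      ((0 < Ilo K ∧ ∀ x ∈ K.toSet, 0 < f x) ∨ (Ihi K < 0 ∧ ∀ x ∈ K.toSet, f x < 0)) := by
  rcases S.eq_empty_or_nonempty with rfl | hSne
  · obtain ⟨δ, hδ, _⟩ := hconv 1 one_pos
    exact ⟨δ, hδ, fun K _ _ hne _ _ => absurd hne (by simp)⟩
  · have hfc : ContinuousOn (fun x => |f x|) S := (hf.mono hSB).abs
    obtain ⟨x₀, hx₀S, hmin⟩ := hScomp.exists_isMinOn hSne hfc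
    have hε : 0 < |f x₀| := abs_pos.mpr (hS0 x₀ hx₀S)
    obtain ⟨δ, hδ, hδ'⟩ := hconv _ hε
    refine ⟨δ, hδ, fun K hKB hKrat hKS hd1 hd2 => ?_⟩
    obtain ⟨y, hyK, hyS⟩ := hKS
    have hmem := hencl K hKB hKrat hd1 y hyK
    have hεy : |f x₀| ≤ |f y| := hmin hyS
    have hwidth := hδ' K hKB hKrat hd1 hd2
    obtain ⟨ha, hb⟩ := hmem
    have h0 : (0:ℝ) ∉ Set.Icc (Ilo K) (Ihi K) := by
      rintro ⟨h1, h2⟩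
      have : |f y| ≤ Ihi K - Ilo K := by
        rw [abs_le]; constructor <;> linarith
      linarith
    refine ⟨h0, ?_⟩
    by_cases h : 0 < Ilo K
    · exact Or.inl ⟨h, fun x hx => lt_of_lt_of_le h (hencl K hKB hKrat hd1 x hx).1⟩
    · have hhi : Ihi K < 0 := by
        by_contra h'
        exact h0 ⟨le_of_not_gt h, le_of_not_gt h'⟩
      exact Or.inr ⟨hhi, fun x hx => lt_of_le_of_lt (hencl K hKB hKrat hd1 x hx).2 hhi⟩
end

section
/- For the function f : ℝⁿ → ℝⁿ given by f₁ = x₁² − x₂² − ⋯ − xₙ², fⱼ = 2x₁xⱼ for j = 2,…,n, the origin is the unique zero of f in [−1,1]ⁿ, 0 ∉ f(∂[−1,1]ⁿ), and deg(f, (−1,1)ⁿ, 0) = 2 when n is even and 0 when n is odd. -/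
open Set

namespace Stmt16Aux


variable {n : ℕ}

def box (a b : Fin n → ℝ) : Set (Fin n → ℝ) := {x | ∀ i, x i ∈ Set.Ioo (a i) (b i)}
def cbox (a b : Fin n → ℝ) : Set (Fin n → ℝ) := {x | ∀ i, x i ∈ Set.Icc (a i) (b i)}

lemma box_eq_pi (a b : Fin n → ℝ) : box a b = Set.pi univ (fun i => Ioo (a i) (b i)) := by
  ext x; simp [box, Set.mem_pi]

lemma cbox_eq_pi (a b : Fin n → ℝ) : cbox a b = Set.pi univ (fun i => Icc (a i) (b i)) := by
  ext x; simp only [cbox, Set.mem_pi, Set.mem_univ, forall_true_left, mem_setOf_eq, forall_const]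

lemma isOpen_box (a b : Fin n → ℝ) : IsOpen (box a b) := by
  rw [box_eq_pi]; exact isOpen_set_pi (Set.finite_univ) (fun i _ => isOpen_Ioo)

lemma closure_box {a b : Fin n → ℝ} (h : ∀ i, a i < b i) :
    closure (box a b) = cbox a b := by
  rw [box_eq_pi, cbox_eq_pi, closure_pi_set]
  exact Set.pi_congr rfl fun i _ => closure_Ioo (h i).ne

lemma convex_box (a b : Fin n → ℝ) : Convex ℝ (box a b) := by
  rw [box_eq_pi]; exact convex_pi (fun i _ => convex_Ioo _ _)

lemma isBounded_cbox (a b : Fin n → ℝ) : Bornology.IsBounded (cbox a b) := by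
  rw [cbox_eq_pi, Set.pi_univ_Icc]; exact isCompact_Icc.isBounded

lemma isBounded_box {a b : Fin n → ℝ} :
    Bornology.IsBounded (box a b) := by
  refine (isBounded_cbox a b).subset ?_
  intro x hx i; exact ⟨(hx i).1.le, (hx i).2.le⟩

lemma mem_frontier_box {a b : Fin n → ℝ} (h : ∀ i, a i < b i) {x : Fin n → ℝ}
    (hx : x ∈ frontier (box a b)) :
    (∀ i, x i ∈ Icc (a i) (b i)) ∧ ∃ i, x i = a i ∨ x i = b i := by
  rw [frontier, (isOpen_box a b).interior_eq, closure_box h] at hx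
  obtain ⟨h1, h2⟩ := hx
  refine ⟨h1, ?_⟩
  by_contra hc
  push_neg at hc
  exact h2 (fun i => ⟨lt_of_le_of_ne (h1 i).1 (Ne.symm (hc i).1), lt_of_le_of_ne (h1 i).2 (hc i).2⟩)

lemma notMem_frontier_of_mem {Ω : Set (Fin n → ℝ)} (hΩ : IsOpen Ω) {x : Fin n → ℝ}
    (hx : x ∈ Ω) : x ∉ frontier Ω := by
  rw [frontier, hΩ.interior_eq]
  exact fun h => h.2 hx

/-! ## generic degree lemmas -/

variable (D : BrouwerDegree n)

lemma deg_noSolution {f : (Fin n → ℝ) → (Fin n → ℝ)} {Ω : Set (Fin n → ℝ)} {p : Fin n → ℝ}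
    (hΩ : IsOpen Ω) (hb : Bornology.IsBounded Ω) (hf : ContinuousOn f (closure Ω))
    (h : ∀ x ∈ closure Ω, f x ≠ p) : D.deg f Ω p = 0 := by
  by_contra hd
  obtain ⟨x, hx, hfx⟩ := D.solution f Ω p hΩ hb hf
    (by rintro ⟨x, hx, rfl⟩; exact h x (frontier_subset_closure hx) rfl) hd
  exact h x (subset_closure hx) hfx

lemma deg_empty (f : (Fin n → ℝ) → (Fin n → ℝ)) (p : Fin n → ℝ) :
    D.deg f ∅ p = 0 := by
  refine deg_noSolution D isOpen_empty Bornology.isBounded_empty ?_ ?_ <;>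
    simp [closure_empty]

lemma deg_enlarge {f : (Fin n → ℝ) → (Fin n → ℝ)} {Ω W : Set (Fin n → ℝ)} {p : Fin n → ℝ}
    (hWo : IsOpen W) (hWb : Bornology.IsBounded W) (hΩo : IsOpen Ω)
    (hΩW : Ω ⊆ W) (hf : ContinuousOn f (closure W))
    (h : ∀ x ∈ closure W, x ∉ Ω → f x ≠ p) :
    D.deg f W p = D.deg f Ω p := by
  have := D.additivity f W Ω ∅ p hWo hWb hΩo isOpen_empty hΩW (empty_subset W)
    (Set.disjoint_empty Ω) hf
    (by rintro ⟨x, ⟨hx1, hx2⟩, rfl⟩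
        simp only [Set.union_empty] at hx2
        exact h x hx1 hx2 rfl)
  rw [this, deg_empty, add_zero]


/-! ## affine maps on the big box -/

def aff (σ z p : Fin n → ℝ) (x : Fin n → ℝ) : Fin n → ℝ :=
  fun i => σ i * (x i - z i) + p i

lemma continuous_aff (σ z p : Fin n → ℝ) : Continuous (aff σ z p) :=
  continuous_pi fun i => by unfold aff; fun_prop

lemma aff_eq_iff {σ z p : Fin n → ℝ} (hσ : ∀ i, σ i ≠ 0) (x : Fin n → ℝ) :
    aff σ z p x = p ↔ x = z := by
  constructor
  · intro h
    funext i
    have := congrFun h i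
    simp only [aff] at this
    have h2 : σ i * (x i - z i) = 0 := by linarith
    rcases mul_eq_zero.1 h2 with h3 | h3
    · exact absurd h3 (hσ i)
    · linarith
  · rintro rfl; funext i; simp [aff]

/-- the big box `(-4,4)^n` -/
def Wb : Set (Fin n → ℝ) := box (fun _ => (-4 : ℝ)) (fun _ => 4)

lemma Wb_lt : ∀ i : Fin n, (fun _ => (-4:ℝ)) i < (fun _ => (4:ℝ)) i := fun _ => by norm_num

lemma isOpen_Wb : IsOpen (Wb : Set (Fin n → ℝ)) := isOpen_box _ _

lemma isBounded_Wb : Bornology.IsBounded (Wb : Set (Fin n → ℝ)) := isBounded_box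

lemma mem_Wb {x : Fin n → ℝ} (hx : ∀ i, |x i| ≤ 2) : x ∈ (Wb : Set (Fin n → ℝ)) := by
  intro i
  have := abs_le.1 (hx i)
  constructor <;> simp only <;> linarith [this.1, this.2]

lemma closure_Wb : closure (Wb : Set (Fin n → ℝ)) = cbox (fun _ => (-4:ℝ)) (fun _ => 4) :=
  closure_box Wb_lt

/-- moving the anchor of an affine diagonal map -/
lemma deg_aff_anchor {σ z z' p : Fin n → ℝ} (hσ : ∀ i, σ i ≠ 0)
    (hz : ∀ i, |z i| ≤ 2) (hz' : ∀ i, |z' i| ≤ 2) :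
    D.deg (aff σ z p) Wb p = D.deg (aff σ z' p) Wb p := by
  set h : ℝ → (Fin n → ℝ) → (Fin n → ℝ) :=
    fun t x i => σ i * (x i - ((1 - t) * z i + t * z' i)) + p i with hh
  have h0 : h 0 = aff σ z p := by
    funext x i; simp only [hh, aff]; ring
  have h1 : h 1 = aff σ z' p := by
    funext x i; simp only [hh, aff]; ring
  rw [← h0, ← h1]
  refine D.homotopy h Wb p isOpen_Wb isBounded_Wb ?_ ?_
  · apply Continuous.continuousOn
    refine continuous_pi fun i => ?_
    simp only [hh]
    fun_prop
  · rintro t ht ⟨x, hx, hxe⟩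
    obtain ⟨hic, i, hi⟩ := mem_frontier_box Wb_lt hx
    have hxi : x i = (1 - t) * z i + t * z' i := by
      have := congrFun hxe i
      simp only [hh] at this
      have h2 : σ i * (x i - ((1 - t) * z i + t * z' i)) = 0 := by linarith
      rcases mul_eq_zero.1 h2 with h3 | h3
      · exact absurd h3 (hσ i)
      · linarith
    obtain ⟨ht0, ht1⟩ := ht
    have b1 := abs_le.1 (hz i)
    have b2 := abs_le.1 (hz' i)
    have : |x i| ≤ 2 := by
      rw [hxi, abs_le]
      constructor <;> nlinarith [b1.1, b1.2, b2.1, b2.2]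
    rcases hi with hi | hi <;> rw [hi] at this <;> simp at this <;> linarith

/-- degree of a translation on the big box is 1 -/
lemma deg_aff_one {z p : Fin n → ℝ} (hz : ∀ i, |z i| ≤ 2) (hp : ∀ i, |p i| ≤ 1) :
    D.deg (aff (fun _ => 1) z p) Wb p = 1 := by
  set h : ℝ → (Fin n → ℝ) → (Fin n → ℝ) :=
    fun t x i => x i - (1 - t) * (z i - p i) with hh
  have h0 : h 0 = aff (fun _ => 1) z p := by
    funext x i; simp only [hh, aff]; ring
  have h1 : h 1 = id := by
    funext x i; simp [hh]
  have hp' : p ∈ (Wb : Set (Fin n → ℝ)) := mem_Wb (fun i => by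
    have := abs_le.1 (hp i); rw [abs_le]; constructor <;> linarith)
  have key : D.deg (h 0) Wb p = D.deg (h 1) Wb p := by
    refine D.homotopy h Wb p isOpen_Wb isBounded_Wb ?_ ?_
    · apply Continuous.continuousOn
      refine continuous_pi fun i => ?_
      simp only [hh]
      fun_prop
    · rintro t ht ⟨x, hx, hxe⟩
      obtain ⟨hic, i, hi⟩ := mem_frontier_box Wb_lt hx
      have hxi : x i = (1 - t) * z i + t * p i := by
        have := congrFun hxe i
        simp only [hh] at this
        linarith [this]
      obtain ⟨ht0, ht1⟩ := ht
      have b1 := abs_le.1 (hz i)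
      have b2 := abs_le.1 (hp i)
      have : |x i| ≤ 2 := by
        rw [hxi, abs_le]
        constructor <;> nlinarith [b1.1, b1.2, b2.1, b2.2]
      rcases hi with hi | hi <;> rw [hi] at this <;> simp at this <;> linarith
  rw [← h0, key, h1]
  exact (D.normalization Wb p isOpen_Wb isBounded_Wb
    (notMem_frontier_of_mem isOpen_Wb hp')).2 hp'


/-- flipping one sign of a diagonal affine map negates the degree -/
lemma deg_aff_flip {σ p : Fin n → ℝ} (k : Fin n) (hσ : ∀ i, σ i = 1 ∨ σ i = -1)
    (hp : ∀ i, |p i| ≤ 1) :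
    D.deg (aff (Function.update σ k (-1)) p p) Wb p
      = - D.deg (aff (Function.update σ k 1) p p) Wb p := by
  have hσ0 : ∀ i, σ i ≠ 0 := fun i => by rcases hσ i with h | h <;> rw [h] <;> norm_num
  set σm := Function.update σ k (-1 : ℝ) with hσm
  set σp := Function.update σ k (1 : ℝ) with hσp
  have hσm0 : ∀ i, σm i ≠ 0 := fun i => by
    by_cases h : i = k
    · subst h; simp [hσm]
    · rw [hσm, Function.update_of_ne h]; exact hσ0 i
  have hσp0 : ∀ i, σp i ≠ 0 := fun i => by
    by_cases h : i = k
    · subst h; simp [hσp]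
    · rw [hσp, Function.update_of_ne h]; exact hσ0 i
  set zr := Function.update p k (1 : ℝ) with hzr
  set zs := Function.update p k (-1 : ℝ) with hzs
  have hzr2 : ∀ i, |zr i| ≤ 2 := fun i => by
    by_cases h : i = k
    · subst h; simp [hzr]
    · rw [hzr, Function.update_of_ne h]; linarith [hp i]
  have hzs2 : ∀ i, |zs i| ≤ 2 := fun i => by
    by_cases h : i = k
    · subst h; simp [hzs]
    · rw [hzs, Function.update_of_ne h]; linarith [hp i]
  have hp2 : ∀ i, |p i| ≤ 2 := fun i => by linarith [hp i]
  -- the quadratic comparison map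
  set Q : (Fin n → ℝ) → (Fin n → ℝ) :=
    fun x i => if i = k then -(x k - 1) * (x k + 1) + p k else σ i * (x i - p i) + p i with hQ
  have hQcont : Continuous Q := by
    refine continuous_pi fun i => ?_
    by_cases h : i = k <;> simp only [hQ, h, if_true, if_false] <;> fun_prop
  -- coordinates away from k force x i = p i
  have coord_ne : ∀ (x : Fin n → ℝ) (i : Fin n), i ≠ k →
      σ i * (x i - p i) + p i = p i → x i = p i := by
    intro x i hik he
    have h2 : σ i * (x i - p i) = 0 := by linarith
    rcases mul_eq_zero.1 h2 with h3 | h3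
    · exact absurd h3 (hσ0 i)
    · linarith
  -- Step A : deg Q Wb p = 0
  have stepA : D.deg Q Wb p = 0 := by
    set hA : ℝ → (Fin n → ℝ) → (Fin n → ℝ) :=
      fun t x i => if i = k then -(x k - 1) * (x k + 1) + p k - 8 * t
        else σ i * (x i - p i) + p i with hhA
    have hA0 : hA 0 = Q := by
      funext x i; by_cases h : i = k <;> simp only [hhA, hQ, h, if_true, if_false] <;> ring
    have key : D.deg (hA 0) Wb p = D.deg (hA 1) Wb p := by
      refine D.homotopy hA Wb p isOpen_Wb isBounded_Wb ?_ ?_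
      · apply Continuous.continuousOn
        refine continuous_pi fun i => ?_
        by_cases h : i = k <;> simp only [hhA, h, if_true, if_false] <;> fun_prop
      · rintro t ht ⟨x, hx, hxe⟩
        obtain ⟨hic, i, hi⟩ := mem_frontier_box Wb_lt hx
        have hk : -(x k - 1) * (x k + 1) + p k - 8 * t = p k := by
          have := congrFun hxe k; simpa only [hhA, if_pos rfl] using this
        have hxk : |x k| ≤ 1 := by
          rw [abs_le]; constructor <;> nlinarith [ht.1, ht.2]
        have hb : ∀ j, |x j| ≤ 1 := by
          intro j
          by_cases h : j = k
          · subst h; exact hxk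
          · have := congrFun hxe j
            simp only [hhA, if_neg h] at this
            rw [coord_ne x j h this]; exact hp j
        have := abs_le.1 (hb i)
        rcases hi with hi | hi <;> rw [hi] at this <;> norm_num at this
    have last : D.deg (hA 1) Wb p = 0 := by
      refine deg_noSolution D isOpen_Wb isBounded_Wb ?_ ?_
      · apply Continuous.continuousOn
        refine continuous_pi fun i => ?_
        by_cases h : i = k <;> simp only [hhA, h, if_true, if_false] <;> fun_prop
      · intro x _ heq
        have := congrFun heq k
        simp only [hhA, if_pos rfl] at this
        nlinarith [sq_nonneg (x k)]
    rw [← hA0, key, last]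
  -- the two small boxes
  set brL : Fin n → ℝ := fun i => if i = k then 1/2 else p i - 1/2 with hbrL
  set brU : Fin n → ℝ := fun i => if i = k then 3/2 else p i + 1/2 with hbrU
  set bsL : Fin n → ℝ := fun i => if i = k then -3/2 else p i - 1/2 with hbsL
  set bsU : Fin n → ℝ := fun i => if i = k then -1/2 else p i + 1/2 with hbsU
  have hbr_lt : ∀ i, brL i < brU i := fun i => by
    by_cases h : i = k
    · simp only [hbrL, hbrU, h, if_true]; norm_num
    · simp only [hbrL, hbrU, h, if_false]; linarith
  have hbs_lt : ∀ i, bsL i < bsU i := fun i => by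
    by_cases h : i = k
    · simp only [hbsL, hbsU, h, if_true]; norm_num
    · simp only [hbsL, hbsU, h, if_false]; linarith
  have hBrW : box brL brU ⊆ Wb := by
    intro x hx i
    have h1 := hx i
    have h2 := abs_le.1 (hp i)
    by_cases h : i = k
    · subst h
      simp only [hbrL, hbrU, if_pos rfl, mem_Ioo] at h1
      exact ⟨by simp only; linarith [h1.1], by simp only; linarith [h1.2]⟩
    · simp only [hbrL, hbrU, if_neg h, mem_Ioo] at h1
      exact ⟨by simp only; linarith [h1.1, h2.1], by simp only; linarith [h1.2, h2.2]⟩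
  have hBsW : box bsL bsU ⊆ Wb := by
    intro x hx i
    have h1 := hx i
    have h2 := abs_le.1 (hp i)
    by_cases h : i = k
    · subst h
      simp only [hbsL, hbsU, if_pos rfl, mem_Ioo] at h1
      exact ⟨by simp only; linarith [h1.1], by simp only; linarith [h1.2]⟩
    · simp only [hbsL, hbsU, if_neg h, mem_Ioo] at h1
      exact ⟨by simp only; linarith [h1.1, h2.1], by simp only; linarith [h1.2, h2.2]⟩
  have hdisj : Disjoint (box brL brU) (box bsL bsU) := by
    rw [Set.disjoint_left]
    intro x hx1 hx2
    have a := hx1 k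
    have b := hx2 k
    simp only [hbrL, hbrU, hbsL, hbsU, if_pos rfl, mem_Ioo] at a b
    linarith [a.1, b.2]
  have hzrBr : zr ∈ box brL brU := by
    intro i
    by_cases h : i = k
    · subst h; simp only [hzr, Function.update_self, hbrL, hbrU, if_pos rfl, mem_Ioo]; norm_num
    · rw [hzr, Function.update_of_ne h]
      simp only [hbrL, hbrU, if_neg h, mem_Ioo]; constructor <;> linarith
  have hzsBs : zs ∈ box bsL bsU := by
    intro i
    by_cases h : i = k
    · subst h; simp only [hzs, Function.update_self, hbsL, hbsU, if_pos rfl, mem_Ioo]; norm_num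
    · rw [hzs, Function.update_of_ne h]
      simp only [hbsL, hbsU, if_neg h, mem_Ioo]; constructor <;> linarith
  -- Step B : additivity
  have stepB : D.deg Q Wb p = D.deg Q (box brL brU) p + D.deg Q (box bsL bsU) p := by
    refine D.additivity Q Wb (box brL brU) (box bsL bsU) p isOpen_Wb isBounded_Wb
      (isOpen_box _ _) (isOpen_box _ _) hBrW hBsW hdisj hQcont.continuousOn ?_
    rintro ⟨x, ⟨hx1, hx2⟩, hxe⟩
    have hk : -(x k - 1) * (x k + 1) + p k = p k := by
      have := congrFun hxe k; simpa only [hQ, if_pos rfl] using this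
    have hk2 : (x k - 1) * (x k + 1) = 0 := by linarith
    have hcoord : ∀ j, j ≠ k → x j = p j := by
      intro j hj
      have := congrFun hxe j
      simp only [hQ, if_neg hj] at this
      exact coord_ne x j hj this
    apply hx2
    rcases mul_eq_zero.1 hk2 with h3 | h3
    · left
      intro i
      by_cases h : i = k
      · subst h
        simp only [hbrL, hbrU, if_pos rfl, mem_Ioo]
        constructor <;> linarith
      · rw [hcoord i h]
        simp only [hbrL, hbrU, if_neg h, mem_Ioo]
        constructor <;> linarith
    · right
      intro i
      by_cases h : i = k
      · subst h
        simp only [hbsL, hbsU, if_pos rfl, mem_Ioo]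
        constructor <;> linarith
      · rw [hcoord i h]
        simp only [hbsL, hbsU, if_neg h, mem_Ioo]
        constructor <;> linarith
  -- Step C : on Br, Q is homotopic to aff σm zr p
  have stepC : D.deg Q (box brL brU) p = D.deg (aff σm zr p) (box brL brU) p := by
    set hr : ℝ → (Fin n → ℝ) → (Fin n → ℝ) :=
      fun t x i => if i = k then -(x k - 1) * ((1 - t) * (x k + 1) + t) + p k
        else σ i * (x i - p i) + p i with hhr
    have hr0 : hr 0 = Q := by
      funext x i; by_cases h : i = k <;> simp only [hhr, hQ, h, if_true, if_false] <;> ring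
    have hr1 : hr 1 = aff σm zr p := by
      funext x i
      by_cases h : i = k
      · subst h
        simp only [hhr, if_pos rfl, aff, hσm, hzr, Function.update_self]
        ring
      · simp only [hhr, if_neg h, aff, hσm, hzr, Function.update_of_ne h]
    rw [← hr0, ← hr1]
    refine D.homotopy hr (box brL brU) p (isOpen_box _ _) isBounded_box ?_ ?_
    · apply Continuous.continuousOn
      refine continuous_pi fun i => ?_
      by_cases h : i = k <;> simp only [hhr, h, if_true, if_false] <;> fun_prop
    · rintro t ht ⟨x, hx, hxe⟩
      obtain ⟨hic, i, hi⟩ := mem_frontier_box hbr_lt hx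
      have hkicc := hic k
      simp only [hbrL, hbrU, if_pos rfl, mem_Icc] at hkicc
      have hbpos : (0:ℝ) < (1 - t) * (x k + 1) + t := by nlinarith [ht.1, ht.2]
      have hk : -(x k - 1) * ((1 - t) * (x k + 1) + t) + p k = p k := by
        have := congrFun hxe k; simpa only [hhr, if_pos rfl] using this
      have hk1 : x k = 1 := by
        rcases mul_eq_zero.1 (show (x k - 1) * ((1 - t) * (x k + 1) + t) = 0 by linarith)
          with h3 | h3
        · linarith
        · linarith
      have hcoord : ∀ j, j ≠ k → x j = p j := by
        intro j hj
        have := congrFun hxe j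
        simp only [hhr, if_neg hj] at this
        exact coord_ne x j hj this
      by_cases h : i = k
      · subst h
        rcases hi with hi | hi <;> simp only [hbrL, hbrU, if_pos rfl] at hi <;>
          rw [hk1] at hi <;> norm_num at hi
      · rcases hi with hi | hi <;> simp only [hbrL, hbrU, if_neg h] at hi <;>
          rw [hcoord i h] at hi <;> linarith
  -- Step D : on Bs, Q is homotopic to aff σp zs p
  have stepD : D.deg Q (box bsL bsU) p = D.deg (aff σp zs p) (box bsL bsU) p := by
    set hs : ℝ → (Fin n → ℝ) → (Fin n → ℝ) :=
      fun t x i => if i = k then (x k + 1) * ((1 - t) * (1 - x k) + t) + p k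
        else σ i * (x i - p i) + p i with hhs
    have hs0 : hs 0 = Q := by
      funext x i; by_cases h : i = k <;> simp only [hhs, hQ, h, if_true, if_false] <;> ring
    have hs1 : hs 1 = aff σp zs p := by
      funext x i
      by_cases h : i = k
      · subst h
        simp only [hhs, if_pos rfl, aff, hσp, hzs, Function.update_self]
        ring
      · simp only [hhs, if_neg h, aff, hσp, hzs, Function.update_of_ne h]
    rw [← hs0, ← hs1]
    refine D.homotopy hs (box bsL bsU) p (isOpen_box _ _) isBounded_box ?_ ?_
    · apply Continuous.continuousOn
      refine continuous_pi fun i => ?_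
      by_cases h : i = k <;> simp only [hhs, h, if_true, if_false] <;> fun_prop
    · rintro t ht ⟨x, hx, hxe⟩
      obtain ⟨hic, i, hi⟩ := mem_frontier_box hbs_lt hx
      have hkicc := hic k
      simp only [hbsL, hbsU, if_pos rfl, mem_Icc] at hkicc
      have hbpos : (0:ℝ) < (1 - t) * (1 - x k) + t := by nlinarith [ht.1, ht.2]
      have hk : (x k + 1) * ((1 - t) * (1 - x k) + t) + p k = p k := by
        have := congrFun hxe k; simpa only [hhs, if_pos rfl] using this
      have hk1 : x k = -1 := by
        rcases mul_eq_zero.1 (show (x k + 1) * ((1 - t) * (1 - x k) + t) = 0 by linarith)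
          with h3 | h3
        · linarith
        · linarith
      have hcoord : ∀ j, j ≠ k → x j = p j := by
        intro j hj
        have := congrFun hxe j
        simp only [hhs, if_neg hj] at this
        exact coord_ne x j hj this
      by_cases h : i = k
      · subst h
        rcases hi with hi | hi <;> simp only [hbsL, hbsU, if_pos rfl] at hi <;>
          rw [hk1] at hi <;> norm_num at hi
      · rcases hi with hi | hi <;> simp only [hbsL, hbsU, if_neg h] at hi <;>
          rw [hcoord i h] at hi <;> linarith
  -- enlargements
  have henl_r : D.deg (aff σm zr p) Wb p = D.deg (aff σm zr p) (box brL brU) p := by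
    refine deg_enlarge D isOpen_Wb isBounded_Wb (isOpen_box _ _) hBrW
      (continuous_aff _ _ _).continuousOn ?_
    intro x _ hnot heq
    rw [aff_eq_iff hσm0] at heq
    exact hnot (heq ▸ hzrBr)
  have henl_s : D.deg (aff σp zs p) Wb p = D.deg (aff σp zs p) (box bsL bsU) p := by
    refine deg_enlarge D isOpen_Wb isBounded_Wb (isOpen_box _ _) hBsW
      (continuous_aff _ _ _).continuousOn ?_
    intro x _ hnot heq
    rw [aff_eq_iff hσp0] at heq
    exact hnot (heq ▸ hzsBs)
  -- re-anchoring
  have hanch_r : D.deg (aff σm zr p) Wb p = D.deg (aff σm p p) Wb p :=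
    deg_aff_anchor D hσm0 hzr2 hp2
  have hanch_s : D.deg (aff σp zs p) Wb p = D.deg (aff σp p p) Wb p :=
    deg_aff_anchor D hσp0 hzs2 hp2
  -- combine
  have : (0:ℤ) = D.deg (aff σm p p) Wb p + D.deg (aff σp p p) Wb p := by
    rw [← hanch_r, ← hanch_s, henl_r, henl_s, ← stepC, ← stepD, ← stepB, stepA]
  linarith



/-- sign pattern : first `K` coordinates flipped -/
def sigup (K : ℕ) : Fin n → ℝ := fun i => if (i : ℕ) < K then -1 else 1

lemma sigup_pm (K : ℕ) : ∀ i : Fin n, sigup K i = 1 ∨ sigup K i = -1 := fun i => by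
  unfold sigup; split
  · right; rfl
  · left; rfl

lemma deg_sigup {p : Fin n → ℝ} (hp : ∀ i, |p i| ≤ 1) :
    ∀ K, K ≤ n → D.deg (aff (sigup K) p p) Wb p = (-1) ^ K := by
  intro K
  induction K with
  | zero =>
    intro _
    have hs : sigup (n := n) 0 = fun _ => (1:ℝ) := by
      funext i; simp [sigup]
    rw [hs, deg_aff_one D (fun i => by linarith [hp i]) hp, pow_zero]
  | succ K ih =>
    intro hK
    have hKn : K < n := hK
    set k : Fin n := ⟨K, hKn⟩ with hk
    have e1 : sigup (n := n) (K + 1) = Function.update (sigup K) k (-1) := by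
      funext i
      by_cases h : i = k
      · subst h
        simp [sigup, hk, Nat.lt_succ_self]
      · rw [Function.update_of_ne h]
        have hne : (i : ℕ) ≠ K := fun hc => h (Fin.ext hc)
        simp only [sigup]
        by_cases hi : (i : ℕ) < K
        · rw [if_pos hi, if_pos (by omega)]
        · rw [if_neg hi, if_neg (by omega)]
    have e2 : sigup (n := n) K = Function.update (sigup K) k 1 := by
      funext i
      by_cases h : i = k
      · subst h
        simp [sigup, hk]
      · rw [Function.update_of_ne h]
    rw [e1, deg_aff_flip D k (sigup_pm K) hp, ← e2, ih (le_of_lt hKn)]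
    ring

lemma deg_aff_negone {p : Fin n → ℝ} (hp : ∀ i, |p i| ≤ 1) :
    D.deg (aff (fun _ => (-1:ℝ)) p p) Wb p = (-1) ^ n := by
  have hs : (fun _ => (-1:ℝ)) = sigup (n := n) n := by
    funext i; simp [sigup, i.isLt]
  rw [hs]
  exact deg_sigup D hp n le_rfl

set_option maxHeartbeats 1600000 in
theorem main_deg {m : ℕ} (DD : BrouwerDegree (m + 1))
    (f : (Fin (m + 1) → ℝ) → (Fin (m + 1) → ℝ))
    (hf1 : ∀ x, f x 0 = x 0 ^ 2 - ∑ j ∈ Finset.univ.erase (0 : Fin (m + 1)), x j ^ 2)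
    (hf2 : ∀ x, ∀ j : Fin (m + 1), j ≠ 0 → f x j = 2 * x 0 * x j) :
    DD.deg f {y | ∀ i, y i ∈ Set.Ioo (-1 : ℝ) 1} 0 =
      if (m + 1) % 2 = 0 then 2 else 0 := by
  classical
  set S : (Fin (m + 1) → ℝ) → ℝ :=
    fun x => ∑ j ∈ Finset.univ.erase (0 : Fin (m + 1)), x j ^ 2 with hS
  have hS_nonneg : ∀ x, 0 ≤ S x := fun x => Finset.sum_nonneg fun j _ => sq_nonneg _
  have hS_single : ∀ (x : Fin (m + 1) → ℝ) (j : Fin (m + 1)), j ≠ 0 → x j ^ 2 ≤ S x :=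
    fun x j hj => Finset.single_le_sum (fun i _ => sq_nonneg (x i))
      (Finset.mem_erase.2 ⟨hj, Finset.mem_univ j⟩)
  have hS_eqzero : ∀ x : Fin (m + 1) → ℝ, (∀ j, j ≠ 0 → x j = 0) → S x = 0 := fun x h =>
    Finset.sum_eq_zero fun j hj => by rw [h j (Finset.mem_erase.1 hj).1]; ring
  have hS_zero_coord : ∀ (x : Fin (m + 1) → ℝ) (j : Fin (m + 1)), j ≠ 0 → S x = 0 → x j = 0 := by
    intro x j hj h0
    have h1 := hS_single x j hj
    have := sq_nonneg (x j)
    nlinarith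
  set Ω : Set (Fin (m + 1) → ℝ) := Stmt16Aux.box (fun _ => (-1:ℝ)) (fun _ => (1:ℝ)) with hΩ
  have hΩeq : {y : Fin (m + 1) → ℝ | ∀ i, y i ∈ Set.Ioo (-1 : ℝ) 1} = Ω := rfl
  have hΩlt : ∀ i : Fin (m + 1), (fun _ => (-1:ℝ)) i < (fun _ => (1:ℝ)) i := fun _ => by
    norm_num
  -- ### Part 3 : the degree computation
  -- target point and square roots
  set p : Fin (m + 1) → ℝ := fun i => if i = 0 then 1/2 else 0 with hp_def
  have hp1 : ∀ i, |p i| ≤ 1 := by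
    intro i
    by_cases hi : i = 0
    · simp only [hp_def, if_pos hi]
      rw [abs_le]; constructor <;> norm_num
    · simp only [hp_def, if_neg hi]
      simp
  have hp2' : ∀ i, |p i| ≤ 2 := fun i => by linarith [hp1 i]
  set c : ℝ := Real.sqrt (1/2) with hc_def
  have hc2 : c ^ 2 = 1/2 := Real.sq_sqrt (by norm_num)
  have hcpos : 0 < c := Real.sqrt_pos.2 (by norm_num)
  have hc1 : c < 1 := by nlinarith
  have hchalf : 1/2 < c := by nlinarith
  set q : Fin (m + 1) → ℝ := fun i => if i = 0 then c else 0 with hq_def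
  set q' : Fin (m + 1) → ℝ := fun i => if i = 0 then -c else 0 with hq'_def
  have hq2 : ∀ i, |q i| ≤ 2 := by
    intro i
    by_cases hi : i = 0
    · simp only [hq_def, if_pos hi]
      rw [abs_le]; constructor <;> linarith
    · simp only [hq_def, if_neg hi]
      simp
  have hq'2 : ∀ i, |q' i| ≤ 2 := by
    intro i
    by_cases hi : i = 0
    · simp only [hq'_def, if_pos hi]
      rw [abs_le]; constructor <;> linarith
    · simp only [hq'_def, if_neg hi]
      simp
  -- the two half boxes
  set a1 : Fin (m + 1) → ℝ := fun i => if i = 0 then 0 else -1 with ha1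
  set b1 : Fin (m + 1) → ℝ := fun _ => (1:ℝ) with hb1
  set a2 : Fin (m + 1) → ℝ := fun _ => (-1:ℝ) with ha2
  set b2 : Fin (m + 1) → ℝ := fun i => if i = 0 then 0 else 1 with hb2
  set Ω1 : Set (Fin (m + 1) → ℝ) := Stmt16Aux.box a1 b1 with hΩ1
  set Ω2 : Set (Fin (m + 1) → ℝ) := Stmt16Aux.box a2 b2 with hΩ2
  have h1lt : ∀ i, a1 i < b1 i := by
    intro i; by_cases hi : i = 0 <;> simp [ha1, hb1, hi]
  have h2lt : ∀ i, a2 i < b2 i := by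
    intro i; by_cases hi : i = 0 <;> simp [ha2, hb2, hi]
  -- continuity of f
  have hfc : Continuous f := by
    have hfF : f = fun x => fun i : Fin (m + 1) =>
        if i = 0 then x 0 ^ 2 - ∑ j ∈ Finset.univ.erase (0 : Fin (m + 1)), x j ^ 2
        else 2 * x 0 * x i := by
      funext x i
      by_cases hi : i = 0
      · subst hi; rw [if_pos rfl, hf1 x]
      · rw [if_neg hi, hf2 x i hi]
    rw [hfF]
    refine continuous_pi fun i => ?_
    by_cases hi : i = 0
    · subst hi
      simp only [if_pos rfl]
      exact ((continuous_apply (0 : Fin (m + 1))).pow 2).sub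
        (continuous_finset_sum _ fun j _ => (continuous_apply j).pow 2)
    · simp only [if_neg hi]
      fun_prop
  -- Step (a) : move the target from 0 to p
  have hstepa : DD.deg f Ω 0 = DD.deg f Ω p := by
    refine DD.locConst f Ω 0 p (Stmt16Aux.isOpen_box _ _) Stmt16Aux.isBounded_box
      hfc.continuousOn (segment ℝ (0 : Fin (m + 1) → ℝ) p)
      ((convex_segment _ _).isConnected ⟨0, left_mem_segment ℝ _ _⟩) ?_
      (left_mem_segment ℝ _ _) (right_mem_segment ℝ _ _)
    rintro y ⟨a, b, ha0, hb0, hab, rfl⟩ ⟨x, hxf, hxe⟩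
    obtain ⟨hic, i, hi⟩ := Stmt16Aux.mem_frontier_box hΩlt hxf
    have hcomp : ∀ j, f x j = b * p j := by
      intro j
      have := congrFun hxe j
      simpa [Pi.add_apply, Pi.smul_apply, smul_eq_mul] using this
    have h0' : x 0 ^ 2 - S x = b * (1/2) := by
      have := hcomp 0
      rw [hf1 x] at this
      simpa [hp_def, hS] using this
    by_cases hx0 : x 0 = 0
    · have hSz : S x = 0 := by
        rw [hx0] at h0'
        nlinarith [hS_nonneg x]
      have hzero : ∀ j, x j = 0 := by
        intro j
        by_cases hj : j = 0
        · rw [hj, hx0]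
        · exact hS_zero_coord x j hj hSz
      rcases hi with hi | hi <;> rw [hzero i] at hi <;> norm_num at hi
    · have hall : ∀ j, j ≠ 0 → x j = 0 := by
        intro j hj
        have := hcomp j
        rw [hf2 x j hj] at this
        simp only [hp_def, if_neg hj, mul_zero] at this
        rcases mul_eq_zero.1 this with h2 | h2
        · rcases mul_eq_zero.1 h2 with h3 | h3
          · norm_num at h3
          · exact absurd h3 hx0
        · exact h2
      have hSz : S x = 0 := hS_eqzero x hall
      have hx0sq : x 0 ^ 2 ≤ 1/2 := by
        rw [hSz] at h0'
        nlinarith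
      by_cases hi0 : i = 0
      · subst hi0
        rcases hi with hi | hi <;> rw [hi] at hx0sq <;> norm_num at hx0sq
      · rcases hi with hi | hi <;> rw [hall i hi0] at hi <;> norm_num at hi
  -- Step (b) : split the cube into the two half boxes
  have hΩ1Ω : Ω1 ⊆ Ω := by
    intro x hx i
    have h1 := hx i
    by_cases hi : i = 0
    · subst hi
      simp only [ha1, hb1, if_pos rfl, mem_Ioo] at h1
      exact ⟨by simp only; linarith [h1.1], by simp only; linarith [h1.2]⟩
    · simp only [ha1, hb1, if_neg hi, mem_Ioo] at h1
      exact ⟨by simp only; linarith [h1.1], by simp only; linarith [h1.2]⟩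
  have hΩ2Ω : Ω2 ⊆ Ω := by
    intro x hx i
    have h1 := hx i
    by_cases hi : i = 0
    · subst hi
      simp only [ha2, hb2, if_pos rfl, mem_Ioo] at h1
      exact ⟨by simp only; linarith [h1.1], by simp only; linarith [h1.2]⟩
    · simp only [ha2, hb2, if_neg hi, mem_Ioo] at h1
      exact ⟨by simp only; linarith [h1.1], by simp only; linarith [h1.2]⟩
  have hdisj : Disjoint Ω1 Ω2 := by
    rw [Set.disjoint_left]
    intro x hx1 hx2
    have u := hx1 0
    have v := hx2 0
    simp only [ha1, hb1, ha2, hb2, if_pos rfl, mem_Ioo] at u v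
    linarith [u.1, v.2]
  have hstepb : DD.deg f Ω p = DD.deg f Ω1 p + DD.deg f Ω2 p := by
    refine DD.additivity f Ω Ω1 Ω2 p (Stmt16Aux.isOpen_box _ _) Stmt16Aux.isBounded_box
      (Stmt16Aux.isOpen_box _ _) (Stmt16Aux.isOpen_box _ _) hΩ1Ω hΩ2Ω hdisj
      hfc.continuousOn ?_
    rintro ⟨x, ⟨hx1, hx2⟩, hxe⟩
    rw [hΩ, Stmt16Aux.closure_box hΩlt] at hx1
    have hcomp : ∀ j, f x j = p j := fun j => congrFun hxe j
    have hx0 : x 0 ≠ 0 := by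
      intro h0
      have := hcomp 0
      rw [hf1 x, h0] at this
      simp only [hp_def, if_pos rfl, hS] at this
      nlinarith [hS_nonneg x]
    have hall : ∀ j, j ≠ 0 → x j = 0 := by
      intro j hj
      have := hcomp j
      rw [hf2 x j hj] at this
      simp only [hp_def, if_neg hj] at this
      rcases mul_eq_zero.1 this with h2 | h2
      · rcases mul_eq_zero.1 h2 with h3 | h3
        · norm_num at h3
        · exact absurd h3 hx0
      · exact h2
    have hSz : S x = 0 := hS_eqzero x hall
    have h0' : x 0 ^ 2 = 1/2 := by
      have := hcomp 0
      rw [hf1 x] at this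
      simp only [hp_def, if_pos rfl, hS] at this
      simp only [hS] at hSz
      linarith
    have hfact : (x 0 - c) * (x 0 + c) = 0 := by nlinarith
    apply hx2
    rcases mul_eq_zero.1 hfact with h3 | h3
    · left
      intro i
      by_cases hi : i = 0
      · subst hi
        simp only [ha1, hb1, if_pos rfl, mem_Ioo]
        constructor <;> nlinarith
      · rw [hall i hi]
        simp only [ha1, hb1, if_neg hi, mem_Ioo]
        constructor <;> norm_num
    · right
      intro i
      by_cases hi : i = 0
      · subst hi
        simp only [ha2, hb2, if_pos rfl, mem_Ioo]
        constructor <;> nlinarith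
      · rw [hall i hi]
        simp only [ha2, hb2, if_neg hi, mem_Ioo]
        constructor <;> norm_num
  -- Step (c) : the degree on the right half box is 1
  set g1 := Stmt16Aux.aff (fun _ => (1:ℝ)) q p with hg1
  set g2 := Stmt16Aux.aff (fun _ => (-1:ℝ)) q' p with hg2
  have hone0 : ∀ i : Fin (m + 1), (fun _ => (1:ℝ)) i ≠ 0 := fun i => by norm_num
  have hnegone0 : ∀ i : Fin (m + 1), (fun _ => (-1:ℝ)) i ≠ 0 := fun i => by norm_num
  have hstepc : DD.deg f Ω1 p = DD.deg g1 Ω1 p := by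
    set H : ℝ → (Fin (m + 1) → ℝ) → (Fin (m + 1) → ℝ) :=
      fun t x => (1 - t) • f x + t • g1 x with hH
    have hH0 : H 0 = f := by
      funext x; simp [hH]
    have hH1 : H 1 = g1 := by
      funext x; simp [hH]
    rw [← hH0, ← hH1]
    refine DD.homotopy H Ω1 p (Stmt16Aux.isOpen_box _ _) Stmt16Aux.isBounded_box ?_ ?_
    · refine Continuous.continuousOn ?_
      have c1 : Continuous fun tx : ℝ × (Fin (m + 1) → ℝ) => f tx.2 := hfc.comp continuous_snd
      have c2 : Continuous fun tx : ℝ × (Fin (m + 1) → ℝ) => g1 tx.2 :=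
        (Stmt16Aux.continuous_aff _ _ _).comp continuous_snd
      exact ((continuous_const.sub continuous_fst).smul c1).add (continuous_fst.smul c2)
    · rintro t ht ⟨x, hx, hxe⟩
      obtain ⟨hic, i, hi⟩ := Stmt16Aux.mem_frontier_box h1lt hx
      have h00 := hic 0
      simp only [ha1, hb1, if_pos rfl, mem_Icc] at h00
      have hcomp : ∀ j, (1 - t) * f x j + t * g1 x j = p j := by
        intro j
        have := congrFun hxe j
        simpa [hH, Pi.add_apply, Pi.smul_apply, smul_eq_mul] using this
      have e0 : (1 - t) * (x 0 ^ 2 - S x) + t * (x 0 - c + 1/2) = 1/2 := by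
        have := hcomp 0
        rw [hf1 x] at this
        simp only [hg1, Stmt16Aux.aff, hq_def, hp_def, if_pos rfl, eq_self_iff_true, if_true, hS] at this ⊢
        linarith [this]
      by_cases hβ : (1 - t) * (2 * x 0) + t = 0
      · have ht0 : t = 0 := by
          nlinarith [mul_nonneg (by linarith [ht.2] : (0:ℝ) ≤ 1 - t)
            (by linarith [h00.1] : (0:ℝ) ≤ 2 * x 0), ht.1]
        have hx00 : x 0 = 0 := by
          rw [ht0] at hβ
          linarith [hβ]
        rw [ht0, hx00] at e0
        nlinarith [hS_nonneg x]
      · have hall : ∀ j, j ≠ 0 → x j = 0 := by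
          intro j hj
          have := hcomp j
          rw [hf2 x j hj] at this
          simp only [hg1, Stmt16Aux.aff, hq_def, hp_def, if_neg hj] at this
          have hprod : x j * ((1 - t) * (2 * x 0) + t) = 0 := by linarith [this]; 
          rcases mul_eq_zero.1 hprod with h2 | h2
          · exact h2
          · exact absurd h2 hβ
        have hSz : S x = 0 := hS_eqzero x hall
        rw [hSz] at e0
        by_cases hi0 : i = 0
        · subst hi0
          rcases hi with hi | hi <;> simp only [ha1, hb1, if_pos rfl] at hi <;> rw [hi] at e0
          · nlinarith [mul_nonneg ht.1 (by linarith : (0:ℝ) ≤ c - 1/2)]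
          · nlinarith [mul_nonneg (by linarith [ht.2] : (0:ℝ) ≤ 1 - t)
              (by linarith : (0:ℝ) ≤ c - 1/2)]
        · rcases hi with hi | hi <;> rw [hall i hi0] at hi <;>
            simp only [ha1, hb1, if_neg hi0] at hi <;> norm_num at hi
  have hqΩ1 : q ∈ Ω1 := by
    intro i
    by_cases hi : i = 0
    · subst hi
      simp only [hq_def, ha1, hb1, if_pos rfl, mem_Ioo]
      exact ⟨hcpos, hc1⟩
    · simp only [hq_def, ha1, hb1, if_neg hi, mem_Ioo]
      norm_num
  have hΩ1W : Ω1 ⊆ Stmt16Aux.Wb := by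
    intro x hx i
    have h1 := hx i
    by_cases hi : i = 0
    · subst hi
      simp only [ha1, hb1, if_pos rfl, mem_Ioo] at h1
      exact ⟨by simp only; linarith [h1.1], by simp only; linarith [h1.2]⟩
    · simp only [ha1, hb1, if_neg hi, mem_Ioo] at h1
      exact ⟨by simp only; linarith [h1.1], by simp only; linarith [h1.2]⟩
  have henl1 : DD.deg g1 Stmt16Aux.Wb p = DD.deg g1 Ω1 p := by
    refine Stmt16Aux.deg_enlarge DD Stmt16Aux.isOpen_Wb Stmt16Aux.isBounded_Wb
      (Stmt16Aux.isOpen_box _ _) hΩ1W (Stmt16Aux.continuous_aff _ _ _).continuousOn ?_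
    intro x _ hnot heq
    rw [hg1, Stmt16Aux.aff_eq_iff hone0] at heq
    exact hnot (heq ▸ hqΩ1)
  have hval1 : DD.deg g1 Stmt16Aux.Wb p = 1 := Stmt16Aux.deg_aff_one DD hq2 hp1
  -- Step (d) : the degree on the left half box is (-1)^(m+1)
  have hstepd : DD.deg f Ω2 p = DD.deg g2 Ω2 p := by
    set H : ℝ → (Fin (m + 1) → ℝ) → (Fin (m + 1) → ℝ) :=
      fun t x => (1 - t) • f x + t • g2 x with hH
    have hH0 : H 0 = f := by
      funext x; simp [hH]
    have hH1 : H 1 = g2 := by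
      funext x; simp [hH]
    rw [← hH0, ← hH1]
    refine DD.homotopy H Ω2 p (Stmt16Aux.isOpen_box _ _) Stmt16Aux.isBounded_box ?_ ?_
    · refine Continuous.continuousOn ?_
      have c1 : Continuous fun tx : ℝ × (Fin (m + 1) → ℝ) => f tx.2 := hfc.comp continuous_snd
      have c2 : Continuous fun tx : ℝ × (Fin (m + 1) → ℝ) => g2 tx.2 :=
        (Stmt16Aux.continuous_aff _ _ _).comp continuous_snd
      exact ((continuous_const.sub continuous_fst).smul c1).add (continuous_fst.smul c2)
    · rintro t ht ⟨x, hx, hxe⟩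
      obtain ⟨hic, i, hi⟩ := Stmt16Aux.mem_frontier_box h2lt hx
      have h00 := hic 0
      simp only [ha2, hb2, if_pos rfl, mem_Icc] at h00
      have hcomp : ∀ j, (1 - t) * f x j + t * g2 x j = p j := by
        intro j
        have := congrFun hxe j
        simpa [hH, Pi.add_apply, Pi.smul_apply, smul_eq_mul] using this
      have e0 : (1 - t) * (x 0 ^ 2 - S x) + t * (-(x 0 + c) + 1/2) = 1/2 := by
        have := hcomp 0
        rw [hf1 x] at this
        simp only [hg2, Stmt16Aux.aff, hq'_def, hp_def, if_pos rfl, eq_self_iff_true, if_true, hS] at this ⊢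
        linarith [this]
      by_cases hβ : (1 - t) * (2 * x 0) - t = 0
      · have ht0 : t = 0 := by
          nlinarith [mul_nonneg (by linarith [ht.2] : (0:ℝ) ≤ 1 - t)
            (by linarith [h00.2] : (0:ℝ) ≤ -(2 * x 0)), ht.1]
        have hx00 : x 0 = 0 := by
          rw [ht0] at hβ
          linarith [hβ]
        rw [ht0, hx00] at e0
        nlinarith [hS_nonneg x]
      · have hall : ∀ j, j ≠ 0 → x j = 0 := by
          intro j hj
          have := hcomp j
          rw [hf2 x j hj] at this
          simp only [hg2, Stmt16Aux.aff, hq'_def, hp_def, if_neg hj] at this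
          have hprod : x j * ((1 - t) * (2 * x 0) - t) = 0 := by linarith [this]
          rcases mul_eq_zero.1 hprod with h2 | h2
          · exact h2
          · exact absurd h2 hβ
        have hSz : S x = 0 := hS_eqzero x hall
        rw [hSz] at e0
        by_cases hi0 : i = 0
        · subst hi0
          rcases hi with hi | hi <;> simp only [ha2, hb2, if_pos rfl] at hi <;> rw [hi] at e0
          · nlinarith [mul_nonneg (by linarith [ht.2] : (0:ℝ) ≤ 1 - t)
              (by linarith : (0:ℝ) ≤ c - 1/2)]
          · nlinarith [mul_nonneg ht.1 (by linarith : (0:ℝ) ≤ c - 1/2)]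
        · rcases hi with hi | hi <;> rw [hall i hi0] at hi <;>
            simp only [ha2, hb2, if_neg hi0] at hi <;> norm_num at hi
  have hq'Ω2 : q' ∈ Ω2 := by
    intro i
    by_cases hi : i = 0
    · subst hi
      simp only [hq'_def, ha2, hb2, if_pos rfl, mem_Ioo]
      constructor <;> linarith
    · simp only [hq'_def, ha2, hb2, if_neg hi, mem_Ioo]
      norm_num
  have hΩ2W : Ω2 ⊆ Stmt16Aux.Wb := by
    intro x hx i
    have h1 := hx i
    by_cases hi : i = 0
    · subst hi
      simp only [ha2, hb2, if_pos rfl, mem_Ioo] at h1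
      exact ⟨by simp only; linarith [h1.1], by simp only; linarith [h1.2]⟩
    · simp only [ha2, hb2, if_neg hi, mem_Ioo] at h1
      exact ⟨by simp only; linarith [h1.1], by simp only; linarith [h1.2]⟩
  have henl2 : DD.deg g2 Stmt16Aux.Wb p = DD.deg g2 Ω2 p := by
    refine Stmt16Aux.deg_enlarge DD Stmt16Aux.isOpen_Wb Stmt16Aux.isBounded_Wb
      (Stmt16Aux.isOpen_box _ _) hΩ2W (Stmt16Aux.continuous_aff _ _ _).continuousOn ?_
    intro x _ hnot heq
    rw [hg2, Stmt16Aux.aff_eq_iff hnegone0] at heq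
    exact hnot (heq ▸ hq'Ω2)
  have hanch2 : DD.deg g2 Stmt16Aux.Wb p
      = DD.deg (Stmt16Aux.aff (fun _ => (-1:ℝ)) p p) Stmt16Aux.Wb p :=
    Stmt16Aux.deg_aff_anchor DD hnegone0 hq'2 hp2'
  have hval2 : DD.deg (Stmt16Aux.aff (fun _ => (-1:ℝ)) p p) Stmt16Aux.Wb p = (-1) ^ (m + 1) :=
    Stmt16Aux.deg_aff_negone DD hp1
  -- put everything together
  have htot : DD.deg f Ω 0 = 1 + (-1) ^ (m + 1) := by
    rw [hstepa, hstepb, hstepc, ← henl1, hval1, hstepd, ← henl2, hanch2, hval2]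
  rw [hΩeq, htot]
  rcases Nat.even_or_odd (m + 1) with he | ho
  · rw [if_pos (Nat.even_iff.1 he), Even.neg_one_pow he]
    norm_num
  · rw [if_neg (by rw [Nat.odd_iff] at ho; omega), Odd.neg_one_pow ho]
    norm_num

end Stmt16Aux

/-- Example 2: for `f₁ = x₁² − x₂² − ⋯ − xₙ²`, `fⱼ = 2x₁xⱼ` (j ≥ 2),
the origin is the unique zero of `f` in `[−1,1]ⁿ`, `0 ∉ f(∂[−1,1]ⁿ)`, and
`deg(f, (−1,1)ⁿ, 0)` is `2` for `n` even and `0` for `n` odd. -/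
theorem stmt16 {m : ℕ} (D : BrouwerDegree (m + 1))
    (f : (Fin (m + 1) → ℝ) → (Fin (m + 1) → ℝ))
    (hf1 : ∀ x, f x 0 = x 0 ^ 2 - ∑ j ∈ Finset.univ.erase (0 : Fin (m + 1)), x j ^ 2)
    (hf2 : ∀ x, ∀ j : Fin (m + 1), j ≠ 0 → f x j = 2 * x 0 * x j) :
    (∀ x : Fin (m + 1) → ℝ, (∀ i, x i ∈ Set.Icc (-1 : ℝ) 1) → (f x = 0 ↔ x = 0)) ∧
    (∀ x ∈ frontier {y : Fin (m + 1) → ℝ | ∀ i, y i ∈ Set.Ioo (-1 : ℝ) 1}, f x ≠ 0) ∧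
    D.deg f {y | ∀ i, y i ∈ Set.Ioo (-1 : ℝ) 1} 0 =
      if (m + 1) % 2 = 0 then 2 else 0 := by
  classical
  -- the auxiliary sum of squares
  set S : (Fin (m + 1) → ℝ) → ℝ := fun x => ∑ j ∈ Finset.univ.erase (0 : Fin (m + 1)), x j ^ 2 with hS
  have hS_nonneg : ∀ x, 0 ≤ S x := fun x => Finset.sum_nonneg fun j _ => sq_nonneg _
  have hS_single : ∀ (x : Fin (m + 1) → ℝ) (j : Fin (m + 1)), j ≠ 0 → x j ^ 2 ≤ S x := fun x j hj =>
    Finset.single_le_sum (fun i _ => sq_nonneg (x i))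
      (Finset.mem_erase.2 ⟨hj, Finset.mem_univ j⟩)
  have hS_eqzero : ∀ x : Fin (m + 1) → ℝ, (∀ j, j ≠ 0 → x j = 0) → S x = 0 := fun x h =>
    Finset.sum_eq_zero fun j hj => by rw [h j (Finset.mem_erase.1 hj).1]; ring
  have hS_zero_coord : ∀ (x : Fin (m + 1) → ℝ) (j : Fin (m + 1)), j ≠ 0 → S x = 0 → x j = 0 := by
    intro x j hj h0
    have h1 := hS_single x j hj
    have := sq_nonneg (x j)
    nlinarith
  -- f x = 0 iff x = 0, with no restriction on x
  have hfzero : ∀ x : Fin (m + 1) → ℝ, f x = 0 ↔ x = 0 := by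
    intro x
    constructor
    · intro h
      have h0 := congrFun h 0
      rw [hf1 x] at h0
      simp only [Pi.zero_apply] at h0
      by_cases hx0 : x 0 = 0
      · have hSz : S x = 0 := by rw [hx0] at h0; simp only [hS] at h0 ⊢; nlinarith
        funext i
        by_cases hi : i = 0
        · rw [hi, hx0]; rfl
        · rw [hS_zero_coord x i hi hSz]; rfl
      · exfalso
        have hall : ∀ j : Fin (m + 1), j ≠ 0 → x j = 0 := by
          intro j hj
          have := congrFun h j
          rw [hf2 x j hj] at this
          simp only [Pi.zero_apply] at this
          rcases mul_eq_zero.1 this with h2 | h2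
          · rcases mul_eq_zero.1 h2 with h3 | h3
            · norm_num at h3
            · exact absurd h3 hx0
          · exact h2
        have := hS_eqzero x hall
        simp only [hS] at this
        have hx2 : x 0 ^ 2 = 0 := by linarith
        exact hx0 (by nlinarith [sq_nonneg (x 0), sq_abs (x 0), abs_nonneg (x 0)] : x 0 = 0)
    · rintro rfl
      funext i
      by_cases hi : i = 0
      · subst hi
        rw [hf1 0]
        simp
      · rw [hf2 0 i hi]
        simp
  have part1 : ∀ x : Fin (m + 1) → ℝ, (∀ i, x i ∈ Set.Icc (-1 : ℝ) 1) → (f x = 0 ↔ x = 0) :=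
    fun x _ => hfzero x
  -- the open cube as a box
  set Ω : Set (Fin (m + 1) → ℝ) := Stmt16Aux.box (fun _ => (-1:ℝ)) (fun _ => (1:ℝ)) with hΩ
  have hΩeq : {y : Fin (m + 1) → ℝ | ∀ i, y i ∈ Set.Ioo (-1 : ℝ) 1} = Ω := rfl
  have hΩlt : ∀ i : Fin (m + 1), (fun _ => (-1:ℝ)) i < (fun _ => (1:ℝ)) i := fun _ => by norm_num
  have part2 : ∀ x ∈ frontier {y : Fin (m + 1) → ℝ | ∀ i, y i ∈ Set.Ioo (-1 : ℝ) 1}, f x ≠ 0 := by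
    intro x hx hfx
    rw [hΩeq] at hx
    obtain ⟨_, i, hi⟩ := Stmt16Aux.mem_frontier_box hΩlt hx
    have hx0 : x = 0 := (hfzero x).1 hfx
    rw [hx0] at hi
    simp only [Pi.zero_apply] at hi
    rcases hi with hi | hi <;> norm_num at hi
  refine ⟨part1, part2, ?_⟩
  exact Stmt16Aux.main_deg D f hf1 hf2
end
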